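/- Let n₀ ∈ ℕ with n₀ ≥ 1 and let b, c be integers. Define rational polynomials f = 2b − (2b/n₀!)·∏_{j=0}^{n₀−1}(X − j), g = −c + (2c/n₀!)·∏_{j=0}^{n₀−1}(X − j), and h the constant polynomial b. Then f and g take integer values on ℤ, and the sequence defined by a_0 = g(0), a_n = f(n)·a_{n−1} + g(n)·(h(n))^n for n ≥ 1 satisfies a_n = (1 − 2^{n+1})·c·b^n for every n < n₀ and a_n = c·b^n for every n ≥ n₀; in particular, if b·c ≠ 0 then a_n = c·b^n if and only if n ≥ n₀. -/

import Mathlib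

open Polynomial

/-- The sequence a(f,g,h) over ℚ: a₀ = g(0), aₙ = f(n)·aₙ₋₁ + g(n)·h(n)ⁿ for n ≥ 1. -/
def seqQ (f g h : Polynomial ℚ) : ℕ → ℚ
  | 0 => g.eval 0
  | n + 1 => f.eval ((n : ℚ) + 1) * seqQ f g h n +
      g.eval ((n : ℚ) + 1) * (h.eval ((n : ℚ) + 1)) ^ (n + 1)

lemma prodXsubC_eval (n : ℕ) (x : ℚ) :
    (∏ j ∈ Finset.range n, (X - C (j : ℚ))).eval x = (descPochhammer ℚ n).eval x := by
  induction n with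
  | zero => simp
  | succ n ih =>
    rw [Finset.prod_range_succ, eval_mul, ih, descPochhammer_succ_eval]
    simp

lemma descPoch_int_dvd (n : ℕ) (m : ℤ) :
    ∃ k : ℤ, (descPochhammer ℚ n).eval (m : ℚ) = (n.factorial : ℚ) * k := by
  refine ⟨Ring.choose m n, ?_⟩
  have h1 : (descPochhammer ℤ n).eval m = (n.factorial : ℤ) * Ring.choose m n := by
    rw [Polynomial.eval_eq_smeval, Ring.descPochhammer_eq_factorial_smul_choose]
    simp [nsmul_eq_mul]
  have h2 := descPochhammer_eval_cast (R := ℚ) n m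
  rw [← h2, h1]
  push_cast
  ring

theorem stmt_16 (n₀ : ℕ) (hn₀ : 1 ≤ n₀) (b c : ℤ)
    (f g h : Polynomial ℚ)
    (hf : f = Polynomial.C (2 * (b : ℚ)) -
      Polynomial.C (2 * (b : ℚ) / (n₀.factorial : ℚ)) *
        ∏ j ∈ Finset.range n₀, (Polynomial.X - Polynomial.C (j : ℚ)))
    (hg : g = Polynomial.C (-(c : ℚ)) +
      Polynomial.C (2 * (c : ℚ) / (n₀.factorial : ℚ)) *
        ∏ j ∈ Finset.range n₀, (Polynomial.X - Polynomial.C (j : ℚ)))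
    (hh : h = Polynomial.C (b : ℚ)) :
    (∀ m : ℤ, ∃ k : ℤ, f.eval (m : ℚ) = (k : ℚ)) ∧
    (∀ m : ℤ, ∃ k : ℤ, g.eval (m : ℚ) = (k : ℚ)) ∧
    (∀ n : ℕ, n < n₀ →
      seqQ f g h n = ((1 - 2 ^ (n + 1)) * c * b ^ n : ℤ)) ∧
    (∀ n : ℕ, n₀ ≤ n → seqQ f g h n = ((c * b ^ n : ℤ) : ℚ)) ∧
    (b * c ≠ 0 → ∀ n : ℕ, seqQ f g h n = ((c * b ^ n : ℤ) : ℚ) ↔ n₀ ≤ n) := by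
  have hfac : (n₀.factorial : ℚ) ≠ 0 := by
    exact_mod_cast Nat.cast_ne_zero.mpr n₀.factorial_ne_zero
  -- evaluation of f and g at rationals
  have hfe : ∀ x : ℚ, f.eval x = 2 * b - 2 * b / n₀.factorial *
      (∏ j ∈ Finset.range n₀, (X - C (j : ℚ))).eval x := by
    intro x; rw [hf]; simp
  have hge : ∀ x : ℚ, g.eval x = -c + 2 * c / n₀.factorial *
      (∏ j ∈ Finset.range n₀, (X - C (j : ℚ))).eval x := by
    intro x; rw [hg]; simp
  -- integer divisibility fact
  have hdvd : ∀ m : ℤ, ∃ k : ℤ,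
      (∏ j ∈ Finset.range n₀, (X - C (j : ℚ))).eval (m : ℚ) = (n₀.factorial : ℚ) * k := by
    intro m
    rw [prodXsubC_eval]
    exact descPoch_int_dvd n₀ m
  -- vanishing below n₀
  have hvanish : ∀ n : ℕ, n < n₀ →
      (∏ j ∈ Finset.range n₀, (X - C (j : ℚ))).eval (n : ℚ) = 0 := by
    intro n hn
    rw [eval_prod]
    exact Finset.prod_eq_zero (Finset.mem_range.mpr hn) (by simp)
  -- value at naturals via descFactorial
  have hnatval : ∀ n : ℕ,
      (∏ j ∈ Finset.range n₀, (X - C (j : ℚ))).eval (n : ℚ) = (n.descFactorial n₀ : ℚ) := by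
    intro n
    rw [prodXsubC_eval]
    exact_mod_cast descPochhammer_eval_eq_descFactorial ℚ n n₀
  have hint_f : ∀ m : ℤ, ∃ k : ℤ, f.eval (m : ℚ) = (k : ℚ) := by
    intro m
    obtain ⟨k, hk⟩ := hdvd m
    refine ⟨2 * b - 2 * b * k, ?_⟩
    rw [hfe, hk]
    field_simp
    push_cast; ring
  have hint_g : ∀ m : ℤ, ∃ k : ℤ, g.eval (m : ℚ) = (k : ℚ) := by
    intro m
    obtain ⟨k, hk⟩ := hdvd m
    refine ⟨-c + 2 * c * k, ?_⟩
    rw [hge, hk]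
    field_simp
    push_cast; ring
  -- for n < n₀ : f(n) = 2b, g(n) = -c
  have hflow : ∀ n : ℕ, n < n₀ → f.eval (n : ℚ) = 2 * b := by
    intro n hn; rw [hfe, hvanish n hn]; ring
  have hglow : ∀ n : ℕ, n < n₀ → g.eval (n : ℚ) = -c := by
    intro n hn; rw [hge, hvanish n hn]; ring
  -- for n ≥ n₀ : f(n) = 2b(1 - D), g(n) = -c + 2cD where D = descFactorial/n₀!
  have hkey : ∀ n : ℕ, n₀ ≤ n → ∃ D : ℚ,
      f.eval (n : ℚ) = 2 * b * (1 - D) ∧ g.eval (n : ℚ) = -c + 2 * c * D ∧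
      (n = n₀ → D = 1) := by
    intro n hn
    refine ⟨(n.descFactorial n₀ : ℚ) / n₀.factorial, ?_, ?_, ?_⟩
    · rw [hfe, hnatval]; field_simp; try ring
    · rw [hge, hnatval]; field_simp; try ring
    · rintro rfl
      rw [Nat.descFactorial_self]
      field_simp
  have hh' : ∀ x : ℚ, h.eval x = (b : ℚ) := by intro x; rw [hh]; simp
  -- part 3 : values below n₀
  have part3 : ∀ n : ℕ, n < n₀ →
      seqQ f g h n = ((1 - 2 ^ (n + 1)) * c * b ^ n : ℤ) := by
    intro n
    induction n with
    | zero =>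
      intro _
      show g.eval 0 = _
      have := hglow 0 hn₀
      rw [Nat.cast_zero] at this
      rw [this]
      push_cast
      ring
    | succ n ih =>
      intro hn
      have hn' : n < n₀ := Nat.lt_of_succ_lt hn
      show f.eval ((n : ℚ) + 1) * seqQ f g h n +
          g.eval ((n : ℚ) + 1) * (h.eval ((n : ℚ) + 1)) ^ (n + 1) = _
      have e1 : ((n : ℚ) + 1) = ((n + 1 : ℕ) : ℚ) := by push_cast; ring
      rw [e1, hflow _ hn, hglow _ hn, hh', ih hn']
      push_cast
      ring
  -- part 4 : values at and above n₀
  have part4 : ∀ n : ℕ, n₀ ≤ n → seqQ f g h n = ((c * b ^ n : ℤ) : ℚ) := by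
    intro n
    induction n with
    | zero =>
      intro hle
      omega
    | succ n ih =>
      intro hle
      show f.eval ((n : ℚ) + 1) * seqQ f g h n +
          g.eval ((n : ℚ) + 1) * (h.eval ((n : ℚ) + 1)) ^ (n + 1) = _
      have e1 : ((n : ℚ) + 1) = ((n + 1 : ℕ) : ℚ) := by push_cast; ring
      obtain ⟨D, hfD, hgD, hD1⟩ := hkey (n + 1) hle
      rw [e1, hfD, hgD, hh']
      rcases Nat.lt_or_ge n n₀ with hlt | hge
      · -- then n + 1 = n₀
        have : n + 1 = n₀ := by omega
        rw [hD1 this, part3 n hlt]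
        push_cast
        ring
      · rw [ih hge]
        push_cast
        ring
  refine ⟨hint_f, hint_g, part3, part4, ?_⟩
  intro hbc n
  constructor
  · intro hval
    by_contra hlt
    push_neg at hlt
    have h3 := part3 n hlt
    rw [hval] at h3
    have h3' : (c * b ^ n : ℤ) = (1 - 2 ^ (n + 1)) * c * b ^ n := by exact_mod_cast h3
    have hb : (b : ℤ) ^ n ≠ 0 := pow_ne_zero n (by rintro rfl; simp at hbc)
    have hc : (c : ℤ) ≠ 0 := by rintro rfl; simp at hbc
    have h2 : (2 : ℤ) ^ (n + 1) ≠ 0 := by positivity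
    have : (2 ^ (n + 1) * c * b ^ n : ℤ) = 0 := by linarith [h3']
    have := mul_ne_zero (mul_ne_zero h2 hc) hb
    omega
  · exact part4 n
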